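/- arXiv:2209.03730 — 2 statements merged into one kernel-verified Lean document; each statement's English description precedes it below -/
import Mathlib

section
/- Let v be a binary vector of length n ≥ 1 and let M, N be positive integers. If the parity vectors of length n of M and of N both equal v, then 2^n divides M − N (as an integer). Conversely, if the parity vector of length n of M equals v and N ≡ M (mod 2^n), then the parity vector of length n of N equals v. (Claim established in the proof of the paper's Theorem 4.5; it justifies Notation 2.2, that the set H(v) of first terms realizing v is the arithmetic progression N_0(v) + 2^n·ℕ.) -/
/-- The Collatz map `T`. -/
def collatzT (N : ℕ) : ℕ := if N % 2 = 0 then N / 2 else (3 * N + 1) / 2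

/-- The parity vector of length `n` of `N`: entry `k` is `true` iff `T^[k] N` is odd. -/
def parityVec (N n : ℕ) : List Bool :=
  (List.range n).map (fun k => decide ((collatzT^[k] N) % 2 = 1))

/-- `m(v)`: the number of ones of a binary vector. -/
def mOnes (v : List Bool) : ℕ := v.count true

/-- `P(v)`: the characteristic number of a binary vector,
`P(v) = Σ_{k=1}^{m} 3^(m-k) * 2^(j_k - 1)` where `j_1 < … < j_m` are the positions of ones. -/
def Pchar : List Bool → ℕ
  | [] => 0
  | e :: rest => (if e then 3 ^ mOnes rest else 0) + 2 * Pchar rest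

lemma parityVec_succ (N n : ℕ) :
    parityVec N (n+1) = decide (N % 2 = 1) :: parityVec (collatzT N) n := by
  simp [parityVec, List.range_succ_eq_map, List.map_map, Function.comp,
    Function.iterate_succ_apply]
  exact ⟨decide_eq_decide.mpr Iff.rfl, fun _ _ => decide_eq_decide.mpr Iff.rfl⟩

lemma collatz_step (M N : ℕ) (h : M % 2 = N % 2) :
    ∃ c : ℤ, c % 2 = 1 ∧
      2 * ((collatzT M : ℤ) - (collatzT N : ℤ)) = c * ((M : ℤ) - (N : ℤ)) := by
  rcases Nat.even_or_odd M with hM | hM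
  · have hM2 : M % 2 = 0 := Nat.even_iff.mp hM
    have hN2 : N % 2 = 0 := h ▸ hM2
    refine ⟨1, by norm_num, ?_⟩
    have h1 : collatzT M = M / 2 := by simp [collatzT, hM2]
    have h2 : collatzT N = N / 2 := by simp [collatzT, hN2]
    rw [h1, h2]
    have e1 : (M : ℤ) = 2 * (M / 2 : ℕ) := by exact_mod_cast (Nat.two_mul_div_two_of_even hM).symm
    have e2 : (N : ℤ) = 2 * (N / 2 : ℕ) := by
      exact_mod_cast (Nat.two_mul_div_two_of_even (Nat.even_iff.mpr hN2)).symm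
    linarith
  · have hM2 : M % 2 = 1 := Nat.odd_iff.mp hM
    have hN2 : N % 2 = 1 := h ▸ hM2
    refine ⟨3, by norm_num, ?_⟩
    have h1 : collatzT M = (3 * M + 1) / 2 := by simp [collatzT, hM2]
    have h2 : collatzT N = (3 * N + 1) / 2 := by simp [collatzT, hN2]
    have e1 : (2 : ℤ) * ((3 * M + 1) / 2 : ℕ) = 3 * M + 1 := by
      exact_mod_cast congrArg (Nat.cast : ℕ → ℤ) (show 2 * ((3 * M + 1) / 2) = 3 * M + 1 by omega)
    have e2 : (2 : ℤ) * ((3 * N + 1) / 2 : ℕ) = 3 * N + 1 := by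
      exact_mod_cast congrArg (Nat.cast : ℕ → ℤ) (show 2 * ((3 * N + 1) / 2) = 3 * N + 1 by omega)
    rw [h1, h2]
    linarith

lemma key (n : ℕ) : ∀ M N : ℕ,
    ((2 : ℤ) ^ n ∣ (M : ℤ) - (N : ℤ)) ↔ parityVec M n = parityVec N n := by
  induction n with
  | zero => intro M N; simp [parityVec]
  | succ n ih =>
    intro M N
    constructor
    · intro hd
      have h2 : (2 : ℤ) ∣ (M : ℤ) - N := dvd_trans (dvd_pow_self 2 (Nat.succ_ne_zero n)) hd
      have hpar : M % 2 = N % 2 := by omega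
      obtain ⟨c, hc, hce⟩ := collatz_step M N hpar
      have hdc : (2 : ℤ) ^ (n+1) ∣ c * ((M : ℤ) - N) := Dvd.dvd.mul_left hd c
      rw [← hce, pow_succ, mul_comm ((2:ℤ)^n) 2] at hdc
      have hdiv : (2 : ℤ) ^ n ∣ (collatzT M : ℤ) - collatzT N := by
        rcases hdc with ⟨k, hk⟩
        exact ⟨k, by linarith⟩
      rw [parityVec_succ, parityVec_succ, (ih _ _).mp hdiv, hpar]
    · intro hv
      rw [parityVec_succ, parityVec_succ] at hv
      obtain ⟨hh, ht⟩ := List.cons.injEq _ _ _ _ ▸ hv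
      have hpar : M % 2 = N % 2 := by
        have := decide_eq_decide.mp hh
        omega
      obtain ⟨c, hc, hce⟩ := collatz_step M N hpar
      have hdiv : (2 : ℤ) ^ n ∣ (collatzT M : ℤ) - collatzT N := (ih _ _).mpr ht
      have h2 : (2 : ℤ) ^ (n+1) ∣ c * ((M : ℤ) - N) := by
        rw [← hce, pow_succ, mul_comm ((2:ℤ)^n) 2]
        exact mul_dvd_mul_left 2 hdiv
      have hcop : IsCoprime ((2:ℤ) ^ (n+1)) c := by
        apply IsCoprime.pow_left
        exact (Int.prime_two.coprime_iff_not_dvd).mpr (by omega)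
      exact hcop.dvd_of_dvd_mul_left h2

/-- If M and N both realize the parity vector v of length n then `2^n ∣ M - N`;
conversely if M realizes v and `N ≡ M [MOD 2^n]` then N realizes v. -/
theorem stmt_2 (n : ℕ) (hn : 1 ≤ n) (v : List Bool) (hv : v.length = n)
    (M N : ℕ) (hM : 0 < M) (hN : 0 < N) :
    (parityVec M n = v → parityVec N n = v → ((2 : ℤ) ^ n ∣ (M : ℤ) - (N : ℤ))) ∧
    (parityVec M n = v → N ≡ M [MOD 2 ^ n] → parityVec N n = v) := by
  constructor
  · intro h1 h2
    exact (key n M N).mpr (h1.trans h2.symm)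
  · intro h1 h2
    have : (N : ℤ) ≡ (M : ℤ) [ZMOD ((2^n : ℕ) : ℤ)] := Int.natCast_modEq_iff.mpr h2
    have hd : (2 : ℤ) ^ n ∣ (N : ℤ) - M := by
      have h := Int.ModEq.dvd this
      push_cast at h
      exact dvd_sub_comm.mp h
    rw [(key n N M).mp hd, h1]
end

section
/- Let n ≥ m ≥ 1 be integers. For every binary vector v of length n with m(v) = m, one has P(v) ≥ 3^m − 2^m; moreover equality holds for the vector whose entries are 1 in positions 1,…,m and 0 in positions m+1,…,n. (Paper's Theorem 4.4.) -/
lemma mOnes_cons (e : Bool) (rest : List Bool) :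
    mOnes (e :: rest) = mOnes rest + (if e then 1 else 0) := by
  cases e <;> simp [mOnes, List.count_cons]

lemma Plow : ∀ v : List Bool, 3 ^ mOnes v - 2 ^ mOnes v ≤ Pchar v := by
  intro v
  induction v with
  | nil => simp [mOnes, Pchar]
  | cons e rest ih =>
    have h32 : 2 ^ mOnes rest ≤ 3 ^ mOnes rest :=
      Nat.pow_le_pow_left (by norm_num) _
    cases e with
    | false =>
      simp only [Pchar, mOnes_cons]
      simp only [Bool.false_eq_true, if_false, add_zero]
      omega
    | true =>
      simp only [Pchar, mOnes_cons, if_true, pow_succ]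
      omega

lemma mOnes_false (k : ℕ) : mOnes (List.replicate k false) = 0 := by
  simp [mOnes, List.count_replicate]

lemma Pchar_false (k : ℕ) : Pchar (List.replicate k false) = 0 := by
  induction k with
  | zero => simp [Pchar]
  | succ k ih => simp [List.replicate_succ, Pchar, ih]

lemma mOnes_app (m k : ℕ) :
    mOnes (List.replicate m true ++ List.replicate k false) = m := by
  simp [mOnes, List.count_append, List.count_replicate]

lemma Peq (m k : ℕ) :
    Pchar (List.replicate m true ++ List.replicate k false) = 3 ^ m - 2 ^ m := by
  induction m with
  | zero => simp [Pchar_false]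
  | succ m ih =>
    have h32 : 2 ^ m ≤ 3 ^ m := Nat.pow_le_pow_left (by norm_num) _
    rw [List.replicate_succ, List.cons_append]
    simp only [Pchar, if_true, mOnes_app, ih, pow_succ]
    omega

/-- Paper's Theorem 4.4: for v of length n with m(v) = m (n ≥ m ≥ 1),
`P v ≥ 3^m - 2^m`, with equality for the vector
`(1,…,1,0,…,0)` (m ones then n-m zeros). -/
theorem stmt_6 (n m : ℕ) (hm : 1 ≤ m) (hmn : m ≤ n) :
    (∀ v : List Bool, v.length = n → mOnes v = m →
      3 ^ m - 2 ^ m ≤ Pchar v) ∧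
    Pchar (List.replicate m true ++ List.replicate (n - m) false) =
      3 ^ m - 2 ^ m := by
  refine ⟨fun v _ hv => ?_, Peq m (n - m)⟩
  simpa [hv] using Plow v
end
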